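/- Let q > 0, v > 0, j a nonnegative integer, n ≥ j an integer with q(n+1)² < v (wide enough for positive decay rate), and set ε = v/(2q(n+1)) - (n+1)/2 > 0. Then the function φ(r) = e^{-ε r}(1 - q e^{-r})^{j+1} · ₂F₁(j - n, j + 1 + v/(q(n+1)); v/(q(n+1)) - n; q e^{-r}) satisfies -φ''(r) + (j(j+1) q e^{-r}/(1 - q e^{-r})² - v e^{-r}/(1 - q e^{-r}))φ(r) = -ε² φ(r) for r > log q. -/

import Mathlib

open Real

/-- The Gauss hypergeometric series ₂F₁(a, b; c; z) with real parameters. -/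
noncomputable def hyp2F1R (a b c z : ℝ) : ℝ :=
  ∑' k : ℕ, (ascPochhammer ℝ k).eval a * (ascPochhammer ℝ k).eval b
    / ((ascPochhammer ℝ k).eval c * (k.factorial : ℝ)) * z ^ k

lemma asc_pos {x : ℝ} (hx : 0 < x) (k : ℕ) : 0 < (ascPochhammer ℝ k).eval x := by
  induction k with
  | zero => simp
  | succ k ih =>
      rw [ascPochhammer_succ_eval]
      exact mul_pos ih (by positivity)

lemma asc_neg_zero (m : ℕ) : ∀ k : ℕ, m < k → (ascPochhammer ℝ k).eval (-(m:ℝ)) = 0 := by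
  intro k hk
  induction k with
  | zero => omega
  | succ k ih =>
      rw [ascPochhammer_succ_eval]
      rcases Nat.lt_or_ge m k with h | h
      · rw [ih h, zero_mul]
      · have : k = m := by omega
        subst this; simp

noncomputable def hulCo (a b c : ℝ) (k : ℕ) : ℝ :=
  (ascPochhammer ℝ k).eval a * (ascPochhammer ℝ k).eval b
    / ((ascPochhammer ℝ k).eval c * (k.factorial : ℝ))

lemma hulCo_zero {a : ℝ} {m : ℕ} (ha : a = -(m:ℝ)) (b c : ℝ) {k : ℕ} (hk : m < k) :
    hulCo a b c k = 0 := by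
  rw [hulCo, ha, asc_neg_zero m k hk, zero_mul, zero_div]

lemma hulCo_rec (a b : ℝ) {c : ℝ} (hc : 0 < c) (k : ℕ) :
    ((k:ℝ)+1)*((k:ℝ)+c)*hulCo a b c (k+1) = ((k:ℝ)+a)*((k:ℝ)+b)*hulCo a b c k := by
  have h1 := ascPochhammer_succ_eval k a
  have h2 := ascPochhammer_succ_eval k b
  have h3 := ascPochhammer_succ_eval k c
  have hcK : (ascPochhammer ℝ k).eval c ≠ 0 := ne_of_gt (asc_pos hc k)
  have hck : c + (k:ℝ) ≠ 0 := by positivity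
  have hfk : (k.factorial : ℝ) ≠ 0 := by positivity
  rw [hulCo, hulCo, h1, h2, h3, Nat.factorial_succ]
  push_cast
  field_simp
  ring

noncomputable def hulP (a b c : ℝ) (m : ℕ) : Polynomial ℝ :=
  ∑ i ∈ Finset.range (m+1), Polynomial.C (hulCo a b c i) * Polynomial.X ^ i

lemma hulP_coeff {a : ℝ} {m : ℕ} (ha : a = -(m:ℝ)) (b c : ℝ) (k : ℕ) :
    (hulP a b c m).coeff k = hulCo a b c k := by
  rw [hulP, Polynomial.finset_sum_coeff]
  simp only [Polynomial.coeff_C_mul_X_pow]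
  rw [Finset.sum_ite_eq]
  split
  · rfl
  · next h =>
      have : m < k := by simpa using h
      exact (hulCo_zero ha b c this).symm

lemma hulP_ode {a : ℝ} {m : ℕ} (ha : a = -(m:ℝ)) (b : ℝ) {c : ℝ} (hc : 0 < c) :
    Polynomial.X * (Polynomial.derivative (Polynomial.derivative (hulP a b c m)))
      - Polynomial.X * (Polynomial.X * Polynomial.derivative (Polynomial.derivative (hulP a b c m)))
      + Polynomial.C c * Polynomial.derivative (hulP a b c m)
      - Polynomial.C (a+b+1) * (Polynomial.X * Polynomial.derivative (hulP a b c m))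
      - Polynomial.C (a*b) * hulP a b c m = 0 := by
  have hco := hulP_coeff ha b c
  ext k
  have hrec := hulCo_rec a b hc
  simp only [Polynomial.coeff_zero, Polynomial.coeff_sub, Polynomial.coeff_add,
    Polynomial.coeff_C_mul]
  match k with
  | 0 =>
      simp only [Polynomial.mul_coeff_zero, Polynomial.coeff_X_zero, zero_mul,
        Polynomial.coeff_derivative, hco]
      have := hrec 0
      push_cast at this ⊢
      linear_combination this
  | 1 =>
      simp only [Polynomial.coeff_X_mul, Polynomial.mul_coeff_zero, Polynomial.coeff_X_zero,
        zero_mul, Polynomial.coeff_derivative, hco]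
      have := hrec 1
      push_cast at this ⊢
      linear_combination this
  | (k+2) =>
      simp only [Polynomial.coeff_X_mul, Polynomial.coeff_derivative, hco]
      have h1 := hrec (k+2)
      push_cast at h1 ⊢
      linear_combination h1

lemma hul_pow_deriv (j : ℕ) (z : ℝ) :
    HasDerivAt (fun t : ℝ => (1-t)^j) (-((j:ℝ)*(1-z)^(j-1))) z := by
  have h := ((hasDerivAt_id z).const_sub 1).pow j
  simp only [id_eq] at h
  refine h.congr_deriv ?_
  ring

lemma hulG_deriv (p : Polynomial ℝ) (j : ℕ) (z : ℝ) :
    HasDerivAt (fun t => (1-t)^(j+1) * p.eval t)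
      ((1-z)^(j+1) * (Polynomial.derivative p).eval z - ((j:ℝ)+1)*(1-z)^j * p.eval z) z := by
  have h1 := (hul_pow_deriv (j+1) z).mul (p.hasDerivAt z)
  refine h1.congr_deriv ?_
  simp only [Nat.add_sub_cancel]
  push_cast
  ring

lemma hulG1_deriv (p : Polynomial ℝ) (j : ℕ) (z : ℝ) :
    HasDerivAt (fun t => (1-t)^(j+1) * (Polynomial.derivative p).eval t
        - ((j:ℝ)+1)*(1-t)^j * p.eval t)
      ((1-z)^(j+1) * (Polynomial.derivative (Polynomial.derivative p)).eval z
        - 2*((j:ℝ)+1)*(1-z)^j * (Polynomial.derivative p).eval z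
        + ((j:ℝ)+1)*(j:ℝ)*(1-z)^(j-1) * p.eval z) z := by
  have hA := hulG_deriv (Polynomial.derivative p) j z
  have h3 := ((hul_pow_deriv j z).const_mul ((j:ℝ)+1)).mul (p.hasDerivAt z)
  refine (hA.sub h3).congr_deriv ?_
  ring

lemma hul_main (j : ℕ) (q v c a b eps : ℝ) (P P1 P2 : ℝ → ℝ)
    (hode : ∀ t : ℝ, t*(1-t)*P2 t + (c-(a+b+1)*t)*P1 t - a*b*P t = 0)
    (hceps : c = 2*eps+1)
    (hab1 : a+b = c+2*(j:ℝ)+1)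
    (hab2 : a*b*q = ((j:ℝ)+1)*(j:ℝ)*q + c*((j:ℝ)+1)*q - v) :
    ∀ t : ℝ, q*(1-t)^2*((2*eps+1)*t*((1-t)^(j+1)*P1 t - ((j:ℝ)+1)*(1-t)^j*P t)
        + t^2*((1-t)^(j+1)*P2 t - 2*((j:ℝ)+1)*(1-t)^j*P1 t
            + ((j:ℝ)+1)*(j:ℝ)*(1-t)^(j-1)*P t))
      = ((j:ℝ)*((j:ℝ)+1)*q*t - v*t*(1-t)) * ((1-t)^(j+1)*P t) := by
  intro t
  have hb : b = c + 2*(j:ℝ) + 1 - a := by linarith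
  subst hb
  have hv : v = ((j:ℝ)+1)*(j:ℝ)*q + c*((j:ℝ)+1)*q - a*(c + 2*(j:ℝ) + 1 - a)*q := by linarith
  subst hv
  have heps : 2*eps + 1 = c := by linarith
  rw [heps]
  match j with
  | 0 =>
      have h := hode t
      push_cast at h ⊢
      simp only [pow_zero, pow_one]
      linear_combination (q*t*(1-t)^2) * h
  | (jj+1) =>
      simp only [Nat.add_sub_cancel]
      have h := hode t
      push_cast at h ⊢
      linear_combination (q*t*(1-t)^3*(1-t)^jj) * h

theorem extended_hulthen_eigenfunction (q v : ℝ) (hq : 0 < q) (hv : 0 < v)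
    (j n : ℕ) (hjn : j ≤ n) (hbound : q * ((n:ℝ)+1)^2 < v)
    (ε : ℝ) (hε : ε = v/(2*q*((n:ℝ)+1)) - ((n:ℝ)+1)/2) (hεpos : 0 < ε)
    (φ : ℝ → ℝ)
    (hφ : φ = fun r => Real.exp (-ε * r) * (1 - q * Real.exp (-r)) ^ (j+1) *
      hyp2F1R ((j:ℝ) - n) ((j:ℝ) + 1 + v/(q*((n:ℝ)+1)))
        (v/(q*((n:ℝ)+1)) - n) (q * Real.exp (-r))) :
    ∀ r : ℝ, Real.log q < r →
      -(deriv (deriv φ) r)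
          + ((j:ℝ)*((j:ℝ)+1) * q * Real.exp (-r) / (1 - q * Real.exp (-r))^2
              - v * Real.exp (-r) / (1 - q * Real.exp (-r))) * φ r
        = -(ε^2) * φ r := by
  have hq0 : q ≠ 0 := ne_of_gt hq
  have hn1 : ((n:ℝ)+1) ≠ 0 := by positivity
  set a : ℝ := (j:ℝ) - ↑n with ha0
  set b : ℝ := (j:ℝ) + 1 + v/(q*((n:ℝ)+1)) with hb0
  set c : ℝ := v/(q*((n:ℝ)+1)) - ↑n with hc0
  set m : ℕ := n - j with hm0
  have ha : a = -(m:ℝ) := by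
    rw [ha0, hm0]
    push_cast [Nat.cast_sub hjn]
    ring
  have hceps : c = 2*ε + 1 := by
    rw [hc0, hε]
    field_simp
    ring
  have hcpos : 0 < c := by rw [hceps]; linarith
  set p : Polynomial ℝ := hulP a b c m with hp0
  set p1 : Polynomial ℝ := Polynomial.derivative p with hp10
  set p2 : Polynomial ℝ := Polynomial.derivative p1 with hp20
  -- hyp2F1R equals polynomial evaluation
  have hsum : ∀ z : ℝ, hyp2F1R a b c z = p.eval z := by
    intro z
    rw [hyp2F1R]
    rw [tsum_eq_sum (s := Finset.range (m+1)) ?_]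
    · rw [hp0, hulP, Polynomial.eval_finset_sum]
      refine Finset.sum_congr rfl fun i _ => ?_
      simp [hulCo]
    · intro k hk
      have hmk : m < k := by simpa using hk
      rw [ha, asc_neg_zero m k hmk]
      simp
  -- ODE for evaluations
  have hodez : ∀ t : ℝ, t*(1-t)*p2.eval t + (c-(a+b+1)*t)*p1.eval t - a*b*p.eval t = 0 := by
    intro t
    have h := congrArg (Polynomial.eval t) (hulP_ode ha b hcpos)
    simp only [Polynomial.eval_add, Polynomial.eval_sub, Polynomial.eval_mul,
      Polynomial.eval_C, Polynomial.eval_X, Polynomial.eval_zero] at h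
    rw [hp0, hp10, hp20]
    linear_combination h
  -- the main polynomial identity
  have hab1 : a + b = c + 2*(j:ℝ) + 1 := by rw [ha0, hb0, hc0]; ring
  have hab2 : a*b*q = ((j:ℝ)+1)*(j:ℝ)*q + c*((j:ℝ)+1)*q - v := by
    rw [ha0, hb0, hc0]
    field_simp
    ring
  have hmain := hul_main j q v c a b ε (fun t => p.eval t) (fun t => p1.eval t)
    (fun t => p2.eval t) hodez hceps hab1 hab2
  -- rewrite φ
  have hφ' : φ = fun r => Real.exp (-ε*r) * ((1 - q*Real.exp (-r))^(j+1) * p.eval (q*Real.exp (-r))) := by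
    funext s
    simp only [hφ]
    rw [hsum]
    ring
  -- derivative machinery
  have hF : ∀ s : ℝ, HasDerivAt (fun t : ℝ => q * Real.exp (-t)) (-(q * Real.exp (-s))) s := by
    intro s
    have h := ((Real.hasDerivAt_exp (-s)).comp s ((hasDerivAt_id s).neg)).const_mul q
    refine h.congr_deriv ?_
    ring
  have hE : ∀ s : ℝ, HasDerivAt (fun t : ℝ => Real.exp (-ε*t)) (Real.exp (-ε*s) * (-ε)) s := by
    intro s
    have h := (Real.hasDerivAt_exp (-ε*s)).comp s ((hasDerivAt_id s).const_mul (-ε))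
    refine h.congr_deriv ?_
    ring
  have hGd : ∀ z : ℝ, HasDerivAt (fun t => (1-t)^(j+1) * p.eval t)
      ((1-z)^(j+1) * p1.eval z - ((j:ℝ)+1)*(1-z)^j * p.eval z) z := by
    intro z; rw [hp10]; exact hulG_deriv p j z
  have hG1d : ∀ z : ℝ, HasDerivAt (fun t => (1-t)^(j+1) * p1.eval t - ((j:ℝ)+1)*(1-t)^j * p.eval t)
      ((1-z)^(j+1) * p2.eval z - 2*((j:ℝ)+1)*(1-z)^j * p1.eval z
        + ((j:ℝ)+1)*(j:ℝ)*(1-z)^(j-1) * p.eval z) z := by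
    intro z; rw [hp10, hp20, hp10]; exact hulG1_deriv p j z
  set G : ℝ → ℝ := fun z => (1-z)^(j+1) * p.eval z with hG0
  set G1 : ℝ → ℝ := fun z => (1-z)^(j+1) * p1.eval z - ((j:ℝ)+1)*(1-z)^j * p.eval z with hG10
  set G2 : ℝ → ℝ := fun z => (1-z)^(j+1) * p2.eval z - 2*((j:ℝ)+1)*(1-z)^j * p1.eval z
        + ((j:ℝ)+1)*(j:ℝ)*(1-z)^(j-1) * p.eval z with hG20
  set D1 : ℝ → ℝ := fun s => Real.exp (-ε*s) *
      (-ε * G (q*Real.exp (-s)) - (q*Real.exp (-s)) * G1 (q*Real.exp (-s))) with hD10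
  set D2 : ℝ → ℝ := fun s => Real.exp (-ε*s) *
      (ε^2 * G (q*Real.exp (-s)) + (2*ε+1) * (q*Real.exp (-s)) * G1 (q*Real.exp (-s))
        + (q*Real.exp (-s))^2 * G2 (q*Real.exp (-s))) with hD20
  have hφd : ∀ s : ℝ, HasDerivAt φ (D1 s) s := by
    intro s
    rw [hφ']
    have hGc : HasDerivAt (fun t => G (q * Real.exp (-t)))
        (G1 (q*Real.exp (-s)) * (-(q*Real.exp (-s)))) s := (hGd _).comp s (hF s)
    have := (hE s).mul hGc
    refine this.congr_deriv ?_
    rw [hD10]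
    ring
  have hD1d : ∀ s : ℝ, HasDerivAt D1 (D2 s) s := by
    intro s
    rw [hD10]
    have hGc : HasDerivAt (fun t => G (q * Real.exp (-t)))
        (G1 (q*Real.exp (-s)) * (-(q*Real.exp (-s)))) s := (hGd _).comp s (hF s)
    have hG1c : HasDerivAt (fun t => G1 (q * Real.exp (-t)))
        (G2 (q*Real.exp (-s)) * (-(q*Real.exp (-s)))) s := (hG1d _).comp s (hF s)
    have hin : HasDerivAt (fun t => -ε * G (q*Real.exp (-t)) - (q*Real.exp (-t)) * G1 (q*Real.exp (-t)))
        (-ε * (G1 (q*Real.exp (-s)) * (-(q*Real.exp (-s))))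
          - ((-(q*Real.exp (-s))) * G1 (q*Real.exp (-s))
            + (q*Real.exp (-s)) * (G2 (q*Real.exp (-s)) * (-(q*Real.exp (-s)))))) s :=
      (hGc.const_mul (-ε)).sub ((hF s).mul hG1c)
    have := (hE s).mul hin
    refine this.congr_deriv ?_
    rw [hD20]
    ring
  intro r hr
  have hdd : deriv (deriv φ) r = D2 r := by
    have h1 : deriv φ = D1 := funext fun s => (hφd s).deriv
    rw [h1]
    exact (hD1d r).deriv
  have hz1 : q * Real.exp (-r) < 1 := by
    have : Real.exp (-r) < Real.exp (-Real.log q) := Real.exp_lt_exp.mpr (by linarith)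
    rw [Real.exp_neg (Real.log q), Real.exp_log hq] at this
    calc q * Real.exp (-r) < q * q⁻¹ := by exact (mul_lt_mul_iff_right₀ hq).mpr this
    _ = 1 := by field_simp
  have hz0 : 0 < q * Real.exp (-r) := by positivity
  have hu : (1 : ℝ) - q * Real.exp (-r) ≠ 0 := by linarith
  have hE0 : Real.exp (-ε*r) ≠ 0 := Real.exp_ne_zero _
  have hφr : φ r = Real.exp (-ε*r) * G (q * Real.exp (-r)) := by rw [hφ']
  have hkey := hmain (q * Real.exp (-r))
  have hAB : ((j:ℝ)*((j:ℝ)+1) * q * Real.exp (-r) / (1 - q*Real.exp (-r))^2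
        - v * Real.exp (-r) / (1 - q*Real.exp (-r))) * ((1 - q*Real.exp (-r))^2)
      = (j:ℝ)*((j:ℝ)+1) * q * Real.exp (-r)
        - v*Real.exp (-r)*(1 - q*Real.exp (-r)) := by
    field_simp
  have hkey' : (1 - q*Real.exp (-r))^2 * ((2*ε+1) * (q*Real.exp (-r)) * G1 (q*Real.exp (-r))
        + (q*Real.exp (-r))^2 * G2 (q*Real.exp (-r)))
      = ((j:ℝ)*((j:ℝ)+1)*q*Real.exp (-r) - v*Real.exp (-r)*(1 - q*Real.exp (-r)))
          * G (q*Real.exp (-r)) := by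
    apply mul_left_cancel₀ hq0
    simp only [hG0, hG10, hG20]
    linear_combination hkey
  rw [hdd, hφr, hD20]
  apply mul_right_cancel₀ (pow_ne_zero 2 hu)
  linear_combination (-(Real.exp (-ε*r))) * hkey'
    + (Real.exp (-ε*r) * G (q*Real.exp (-r))) * hAB
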